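/- For a bounded self-adjoint operator F on a complex Hilbert space, the spectrum of F equals the set {α ∈ ℝ : for no bounded self-adjoint G does (F − α·1) ∙ G = 1}, where ∙ is the anticommutator Jordan product (1/2)(AB + BA). -/

import Mathlib

theorem spectrum_via_jordan_product
    {H : Type*} [NormedAddCommGroup H] [InnerProductSpace ℂ H] [CompleteSpace H]
    (F : H →L[ℂ] H) (hF : IsSelfAdjoint F) :
    {α : ℝ | (α : ℂ) ∈ spectrum ℂ F} =
      {α : ℝ | ¬ ∃ G : H →L[ℂ] H, IsSelfAdjoint G ∧
        ((1 : ℂ)/2) • ((F - (α : ℂ) • 1) * G + G * (F - (α : ℂ) • 1)) = 1} := by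
  ext α
  simp only [Set.mem_setOf_eq, spectrum.mem_iff, Algebra.algebraMap_eq_smul_one]
  set A : H →L[ℂ] H := F - (α : ℂ) • 1 with hAdef
  have hA : IsSelfAdjoint A := by
    rw [hAdef]
    apply hF.sub
    show star _ = _
    rw [star_smul, star_one]
    simp
  have hunit : IsUnit ((α : ℂ) • 1 - F) ↔ IsUnit A := by
    rw [show A = -(((α:ℂ)•1) - F) by rw [hAdef, neg_sub]]
    exact (IsUnit.neg_iff _).symm
  rw [hunit]
  apply not_iff_not.mpr
  constructor
  · rintro ⟨u, hu⟩
    have h1 : A * ↑u⁻¹ = 1 := by rw [← hu]; exact u.mul_inv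
    have h2 : (↑u⁻¹ : H →L[ℂ] H) * A = 1 := by rw [← hu]; exact u.inv_mul
    refine ⟨↑u⁻¹, ?_, ?_⟩
    · have : star (↑u⁻¹ : H →L[ℂ] H) * A = 1 := by
        have := congrArg star h1
        rwa [star_mul, hA.star_eq, star_one] at this
      exact left_inv_eq_right_inv this h1
    · rw [h1, h2]
      rw [show ((1:H →L[ℂ] H) + 1) = (2:ℂ) • 1 by rw [two_smul], smul_smul]
      norm_num
  · rintro ⟨G, hG, heq⟩
    -- key inequality : ∀ x, ‖x‖ ≤ ‖G‖ * ‖A x‖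
    have key : ∀ x : H, ‖x‖ ≤ ‖G‖ * ‖A x‖ := by
      intro x
      have hx : ((1:ℂ)/2) • (A (G x) + G (A x)) = x := by
        have := congrArg (fun T : H →L[ℂ] H => T x) heq
        simpa using this
      have hinner : (inner ℂ x x : ℂ) =
          ((1:ℂ)/2) * (inner ℂ (A x) (G x) + inner ℂ (G x) (A x)) := by
        have h1 : (inner ℂ x (((1:ℂ)/2) • (A (G x) + G (A x))) : ℂ) = inner ℂ x x := by
          rw [hx]
        have e1 : (inner ℂ x (A (G x)) : ℂ) = inner ℂ (A x) (G x) := by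
          rw [← ContinuousLinearMap.adjoint_inner_left A, hA.adjoint_eq]
        have e2 : (inner ℂ x (G (A x)) : ℂ) = inner ℂ (G x) (A x) := by
          rw [← ContinuousLinearMap.adjoint_inner_left G, hG.adjoint_eq]
        rw [← h1, inner_smul_right, inner_add_right, e1, e2]
      have hsq : (‖x‖:ℝ)^2 = (inner ℂ (A x) (G x) : ℂ).re := by
        have h2 := congrArg Complex.re hinner
        rw [← RCLike.re_to_complex, inner_self_eq_norm_sq] at h2
        have hw : (inner ℂ (G x) (A x) : ℂ).re = (inner ℂ (A x) (G x) : ℂ).re := by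
          rw [← inner_conj_symm (G x) (A x), Complex.conj_re]
        rw [h2, show ((1:ℂ)/2) = ((1/2:ℝ):ℂ) by norm_num, Complex.re_ofReal_mul,
          Complex.add_re, hw]
        ring
      have hb : (inner ℂ (A x) (G x) : ℂ).re ≤ ‖A x‖ * (‖G‖ * ‖x‖) := by
        calc (inner ℂ (A x) (G x) : ℂ).re ≤ ‖(inner ℂ (A x) (G x) : ℂ)‖ :=
              Complex.re_le_norm _
          _ ≤ ‖A x‖ * ‖G x‖ := norm_inner_le_norm _ _
          _ ≤ ‖A x‖ * (‖G‖ * ‖x‖) := by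
              gcongr; exact G.le_opNorm x
      rcases eq_or_ne x 0 with rfl | hx0
      · simp
      · have hxpos : 0 < ‖x‖ := norm_pos_iff.mpr hx0
        nlinarith [hsq, hb]
    -- A injective
    have hinj : Function.Injective A := by
      intro x y hxy
      have : ‖x - y‖ ≤ ‖G‖ * ‖A (x - y)‖ := key _
      rw [map_sub, hxy, sub_self, norm_zero, mul_zero] at this
      have := le_antisymm this (norm_nonneg _)
      rwa [norm_eq_zero, sub_eq_zero] at this
    -- A has closed range
    have hanti : AntilipschitzWith ‖G‖₊ A :=
      ContinuousLinearMap.antilipschitz_of_bound A (by simpa using key)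
    have hclosed : IsClosed (Set.range A) :=
      hanti.isClosed_range A.uniformContinuous
    have hclosed' : IsClosed ((LinearMap.range (A : H →ₗ[ℂ] H) : Submodule ℂ H) : Set H) := by
      simpa [LinearMap.coe_range] using hclosed
    haveI : CompleteSpace (LinearMap.range (A : H →ₗ[ℂ] H)) := hclosed'.completeSpace_coe
    -- A surjective
    have hsurj : LinearMap.range (A : H →ₗ[ℂ] H) = ⊤ := by
      rw [← Submodule.orthogonal_eq_bot_iff]
      rw [Submodule.eq_bot_iff]
      intro x hx
      have hAx : A x = 0 := by
        have h2 : (inner ℂ (A (A x)) x : ℂ) = 0 :=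
          (Submodule.mem_orthogonal _ _).mp hx (A (A x)) (LinearMap.mem_range_self (A : H →ₗ[ℂ] H) (A x))
        have h3 : (inner ℂ (A x) (A x) : ℂ) = 0 := by
          calc (inner ℂ (A x) (A x) : ℂ)
              = inner ℂ ((ContinuousLinearMap.adjoint A) (A x)) x :=
                (ContinuousLinearMap.adjoint_inner_left A x (A x)).symm
            _ = inner ℂ (A (A x)) x := by rw [hA.adjoint_eq]
            _ = 0 := h2
        exact inner_self_eq_zero.mp h3
      have := key x
      rw [hAx, norm_zero, mul_zero] at this
      exact norm_eq_zero.mp (le_antisymm this (norm_nonneg _))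
    -- build the unit
    have hbij : Function.Bijective A :=
      ⟨hinj, LinearMap.range_eq_top.mp hsurj⟩
    let e : H ≃L[ℂ] H := ContinuousLinearEquiv.ofBijective A
      (LinearMap.ker_eq_bot.mpr hinj) hsurj
    refine ⟨⟨A, (e.symm : H →L[ℂ] H), ?_, ?_⟩, rfl⟩
    · ext x
      simp [e, ContinuousLinearMap.mul_apply]
    · ext x
      simp [e, ContinuousLinearMap.mul_apply]
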